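/- Let w ∈ (0,1/2), let M_w be the 3×3 real matrix [[1,0,2w],[0,2w,0],[2w,0,2w]], and let V be the 3×3 real matrix [[1,0,1/3],[0,1/3,0],[1/3,0,1/5]]. Then for any sequences (aₖ), (bₖ), (cₖ) of positive reals with aₖ → 0, bₖ → 0 and cₖ → ∞, one has tr( (M_w + diag(aₖ,bₖ,cₖ))⁻¹ V ) → 1 + 1/(6w). -/

import Mathlib

/-- Quadratic regression, Case 3 limit: a,b → 0, c → ∞ gives
tr((M_w + diag(a,b,c))⁻¹ V) → 1 + 1/(6w). -/
theorem stmt_8 (w : ℝ) (hw : w ∈ Set.Ioo (0:ℝ) (1/2))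
    (a b c : ℕ → ℝ) (ha0 : ∀ k, 0 < a k) (hb0 : ∀ k, 0 < b k) (hc0 : ∀ k, 0 < c k)
    (ha : Filter.Tendsto a Filter.atTop (nhds 0))
    (hb : Filter.Tendsto b Filter.atTop (nhds 0))
    (hc : Filter.Tendsto c Filter.atTop Filter.atTop) :
    Filter.Tendsto
      (fun k =>
        ((((!![1, 0, 2*w; 0, 2*w, 0; 2*w, 0, 2*w] : Matrix (Fin 3) (Fin 3) ℝ) +
            Matrix.diagonal ![a k, b k, c k])⁻¹) *
          (!![1, 0, 1/3; 0, 1/3, 0; 1/3, 0, 1/5] : Matrix (Fin 3) (Fin 3) ℝ)).trace)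
      Filter.atTop (nhds (1 + 1 / (6*w))) := by
  obtain ⟨hw0, hw2⟩ := hw
  have key : ∀ k,
      ((((!![1, 0, 2*w; 0, 2*w, 0; 2*w, 0, 2*w] : Matrix (Fin 3) (Fin 3) ℝ) +
          Matrix.diagonal ![a k, b k, c k])⁻¹) *
        (!![1, 0, 1/3; 0, 1/3, 0; 1/3, 0, 1/5] : Matrix (Fin 3) (Fin 3) ℝ)).trace =
      ((2*w*(c k)⁻¹ + 1) - (4*w/3)*(c k)⁻¹ + ((1 + a k)/5)*(c k)⁻¹) /
        ((1 + a k)*(2*w*(c k)⁻¹+1) - 4*w^2*(c k)⁻¹) + 1/(3*(2*w + b k)) := by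
    intro k
    have hx := ha0 k; have hy := hb0 k; have hz := hc0 k
    set x := a k; set y := b k; set z := c k
    have hD : 0 < (1+x)*(2*w+z) - 4*w^2 := by nlinarith
    have hD' : (1+x)*(2*w+z) - 4*w^2 ≠ 0 := ne_of_gt hD
    have hby : 2*w + y ≠ 0 := by positivity
    set D := (1+x)*(2*w+z) - 4*w^2 with hDdef
    have hM : (!![1, 0, 2*w; 0, 2*w, 0; 2*w, 0, 2*w] : Matrix (Fin 3) (Fin 3) ℝ) +
        Matrix.diagonal ![x, y, z] = !![1+x, 0, 2*w; 0, 2*w+y, 0; 2*w, 0, 2*w+z] := by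
      ext i j
      fin_cases i <;> fin_cases j <;>
        simp [Matrix.diagonal, Matrix.add_apply]
    have hinv : (!![1+x, 0, 2*w; 0, 2*w+y, 0; 2*w, 0, 2*w+z] : Matrix (Fin 3) (Fin 3) ℝ)⁻¹ =
        !![(2*w+z)/D, 0, -(2*w)/D; 0, 1/(2*w+y), 0; -(2*w)/D, 0, (1+x)/D] := by
      apply Matrix.inv_eq_right_inv
      ext i j
      fin_cases i <;> fin_cases j <;>
        simp [Matrix.mul_apply, Fin.sum_univ_three, Matrix.one_apply] <;>
        field_simp <;> ring
    rw [hM, hinv]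
    have hz' : z ≠ 0 := ne_of_gt hz
    rw [Matrix.trace_fin_three]
    simp [Matrix.mul_apply, Fin.sum_univ_three, hDdef]
    field_simp
    ring
  simp only [key]
  have ht : Filter.Tendsto (fun k => (c k)⁻¹) Filter.atTop (nhds 0) :=
    Filter.Tendsto.inv_tendsto_atTop hc
  have hnum : Filter.Tendsto
      (fun k => (2*w*(c k)⁻¹ + 1) - (4*w/3)*(c k)⁻¹ + ((1 + a k)/5)*(c k)⁻¹)
      Filter.atTop (nhds 1) := by
    have : Filter.Tendsto
        (fun k => (2*w*(c k)⁻¹ + 1) - (4*w/3)*(c k)⁻¹ + ((1 + a k)/5)*(c k)⁻¹)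
        Filter.atTop (nhds ((2*w*0 + 1) - (4*w/3)*0 + ((1 + 0)/5)*0)) := by
      apply Filter.Tendsto.add
      apply Filter.Tendsto.sub
      · exact ((ht.const_mul _).add tendsto_const_nhds)
      · exact ht.const_mul _
      · exact (((ha.const_add 1).div_const 5).mul ht)
    simpa using this
  have hden : Filter.Tendsto
      (fun k => (1 + a k)*(2*w*(c k)⁻¹+1) - 4*w^2*(c k)⁻¹)
      Filter.atTop (nhds 1) := by
    have : Filter.Tendsto
        (fun k => (1 + a k)*(2*w*(c k)⁻¹+1) - 4*w^2*(c k)⁻¹)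
        Filter.atTop (nhds ((1 + 0)*(2*w*0+1) - 4*w^2*0)) := by
      apply Filter.Tendsto.sub
      · exact (ha.const_add 1).mul ((ht.const_mul _).add tendsto_const_nhds)
      · exact ht.const_mul _
    simpa using this
  have h1 : Filter.Tendsto
      (fun k => ((2*w*(c k)⁻¹ + 1) - (4*w/3)*(c k)⁻¹ + ((1 + a k)/5)*(c k)⁻¹) /
        ((1 + a k)*(2*w*(c k)⁻¹+1) - 4*w^2*(c k)⁻¹))
      Filter.atTop (nhds 1) := by
    have := hnum.div hden (by norm_num)
    rw [div_one] at this
    exact this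
  have h2 : Filter.Tendsto (fun k => 1/(3*(2*w + b k))) Filter.atTop (nhds (1/(6*w))) := by
    have hd : Filter.Tendsto (fun k => 3*(2*w + b k)) Filter.atTop (nhds (6*w)) := by
      have : Filter.Tendsto (fun k => 3*(2*w + b k)) Filter.atTop (nhds (3*(2*w + 0))) :=
        (hb.const_add (2*w)).const_mul 3
      simpa [mul_comm] using (by ring_nf at this ⊢; convert this using 2)
    exact (tendsto_const_nhds.div hd (by positivity))
  exact h1.add h2
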